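/- Let U and V be subsets of ℕ such that the natural density d(U) exists and equals γ > 0. Then the set U/V = {u/v : u ∈ U, v ∈ V} is dense in ℝ_{>0} if and only if V is infinite. -/

import Mathlib

set_option maxHeartbeats 1000000 in
/-- Theorem 2: if `U ⊆ ℕ` has natural density `γ > 0` and `V ⊆ ℕ`, then
`U/V = {u/v : u ∈ U, v ∈ V}` is dense in the positive reals iff `V` is infinite. -/
theorem stmt_3 (U V : Set ℕ) (γ : ℝ) (hγ : 0 < γ)
    (hU : Filter.Tendsto (fun n : ℕ => ({u ∈ U | u ≤ n}.ncard : ℝ) / n)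
      Filter.atTop (nhds γ)) :
    (Set.Ioi (0 : ℝ) ⊆
        closure {x : ℝ | ∃ u ∈ U, ∃ v ∈ V, x = (u : ℝ) / (v : ℝ)}) ↔ V.Infinite := by
  constructor
  · intro h
    by_contra hfin
    rw [Set.not_infinite] at hfin
    obtain ⟨M, hM⟩ := hfin.bddAbove
    simp only [upperBounds, Set.mem_setOf_eq] at hM
    set S := {x : ℝ | ∃ u ∈ U, ∃ v ∈ V, x = (u : ℝ) / (v : ℝ)}
    have hsub : S ⊆ {(0:ℝ)} ∪ Set.Ici (1 / (M + 1) : ℝ) := by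
      rintro y ⟨u, hu, v, hv, rfl⟩
      rcases Nat.eq_zero_or_pos u with rfl | hu1
      · left; simp
      rcases Nat.eq_zero_or_pos v with rfl | hv1
      · left; simp
      · right
        have hvM : (v:ℝ) ≤ M + 1 := by
          have := hM hv
          exact_mod_cast Nat.le_succ_of_le this
        have hvpos : (0:ℝ) < v := by exact_mod_cast hv1
        have hupos : (1:ℝ) ≤ u := by exact_mod_cast hu1
        have : (1:ℝ) / (M+1) ≤ 1 / v := by
          apply one_div_le_one_div_of_le hvpos hvM
        calc (1:ℝ)/(M+1) ≤ 1/v := this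
          _ ≤ u / v := by gcongr
    have hcl : closure S ⊆ {(0:ℝ)} ∪ Set.Ici (1 / (M + 1) : ℝ) :=
      closure_minimal hsub (isClosed_singleton.union isClosed_Ici)
    have hx : (1 / (2 * (M + 1)) : ℝ) ∈ Set.Ioi (0:ℝ) := Set.mem_Ioi.mpr (by positivity)
    have := hcl (h hx)
    have hM1 : (0:ℝ) < M + 1 := by positivity
    rcases this with h0 | h1
    · simp only [Set.mem_singleton_iff] at h0
      have : (0:ℝ) < 1 / (2 * (M + 1)) := by positivity
      rw [h0] at this; exact lt_irrefl _ this
    · simp only [Set.mem_Ici] at h1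
      have : (1 / (2 * (M + 1)) : ℝ) < 1 / (M + 1) := by
        rw [div_lt_div_iff₀ (by positivity) hM1]
        ring_nf; nlinarith
      linarith
  · intro hV x hxm
    have hx : (0:ℝ) < x := hxm
    rw [Metric.mem_closure_iff]
    intro ε hε
    set ε' : ℝ := min (ε/2) (x/2) with hε'def
    have hε'pos : 0 < ε' := lt_min (by linarith) (by linarith)
    have hε'x : ε' ≤ x/2 := min_le_right _ _
    have hε'ε : ε' ≤ ε/2 := min_le_left _ _
    have hxe : 0 < x - ε' := by linarith
    set δ : ℝ := γ * ε' / (10 * x) with hδdef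
    have hδpos : 0 < δ := by positivity
    rw [Metric.tendsto_atTop] at hU
    obtain ⟨N₀, hN₀⟩ := hU δ hδpos
    -- counting bound
    have key : ∀ n : ℕ, N₀ ≤ n → 1 ≤ n →
        |({u ∈ U | u ≤ n}.ncard : ℝ) - γ * n| ≤ δ * n := by
      intro n hn hn1
      have h1 := hN₀ n hn
      rw [Real.dist_eq] at h1
      have hnpos : (0:ℝ) < n := by exact_mod_cast hn1
      have heq : |({u ∈ U | u ≤ n}.ncard : ℝ) - γ * n|
          = |({u ∈ U | u ≤ n}.ncard : ℝ)/n - γ| * n := by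
        rw [← abs_of_pos hnpos, ← abs_mul]
        congr 1
        field_simp
        rw [abs_of_pos hnpos]; ring
      rw [heq]
      nlinarith [abs_nonneg (({u ∈ U | u ≤ n}.ncard : ℝ)/n - γ)]
    -- choose v ∈ V large
    obtain ⟨M, hMr⟩ := exists_nat_ge (2*(N₀:ℝ)/x + 2/ε')
    obtain ⟨v, hvV, hvM⟩ := hV.exists_gt M
    have hvge : (M:ℝ) + 1 ≤ v := by exact_mod_cast hvM
    have hterm1 : (0:ℝ) ≤ 2*(N₀:ℝ)/x := by positivity
    have hterm2 : (0:ℝ) ≤ 2/ε' := by positivity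
    have hv1 : (1:ℝ) ≤ v := by linarith
    have hv0 : (0:ℝ) ≤ v := by linarith
    have hvpos : (0:ℝ) < v := by linarith
    have hvN : 2*(N₀:ℝ)/x ≤ v := by linarith
    have hvE : 2/ε' ≤ v := by linarith
    have hvN' : (N₀:ℝ) ≤ (v:ℝ)*x/2 := by
      rw [div_le_iff₀ hx] at hvN; linarith
    have hvε' : (2:ℝ) ≤ (v:ℝ)*ε' := by
      rw [div_le_iff₀ hε'pos] at hvE; linarith
    -- the window
    set a : ℕ := ⌈(v:ℝ)*(x-ε')⌉₊ with hadef
    set b : ℕ := ⌊(v:ℝ)*(x+ε')⌋₊ with hbdef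
    have ha1 : (v:ℝ)*(x-ε') ≤ a := Nat.le_ceil _
    have ha2 : (a:ℝ) ≤ (v:ℝ)*(x-ε') + 1 := (Nat.ceil_lt_add_one (by positivity)).le
    have hb1 : (b:ℝ) ≤ (v:ℝ)*(x+ε') := Nat.floor_le (by positivity)
    have hb2 : (v:ℝ)*(x+ε') - 1 ≤ b := by
      have := Nat.lt_floor_add_one ((v:ℝ)*(x+ε')); linarith
    have e1 : (v:ℝ)*(x-ε') = (v:ℝ)*x - (v:ℝ)*ε' := by ring
    have e2 : (v:ℝ)*(x+ε') = (v:ℝ)*x + (v:ℝ)*ε' := by ring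
    have e3 : (v:ℝ)*(x/2) = (v:ℝ)*x/2 := by ring
    have hvxhalf : (v:ℝ)*ε' ≤ (v:ℝ)*(x/2) := mul_le_mul_of_nonneg_left hε'x hv0
    have habR : (a:ℝ) ≤ b := by linarith
    have hab : a ≤ b := by exact_mod_cast habR
    have hN₀aR : (N₀:ℝ) ≤ a := by linarith
    have hN₀a : N₀ ≤ a := by exact_mod_cast hN₀aR
    have hN₀b : N₀ ≤ b := le_trans hN₀a hab
    have h1aR : (1:ℝ) ≤ a := by linarith
    have h1a : 1 ≤ a := by exact_mod_cast h1aR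
    have h1b : 1 ≤ b := le_trans h1a hab
    -- counting
    have ka := abs_le.mp (key a hN₀a h1a)
    have kb := abs_le.mp (key b hN₀b h1b)
    have hba : (v:ℝ)*ε' ≤ (b:ℝ) - a := by linarith
    have hsum : (a:ℝ) + b ≤ 3*(v:ℝ)*x := by linarith
    have hδsum : δ*a + δ*b ≤ 3*(v:ℝ)*(γ*ε')/10 := by
      have h1 : δ * ((a:ℝ)+b) ≤ δ * (3*(v:ℝ)*x) := mul_le_mul_of_nonneg_left hsum hδpos.le
      have h2 : δ * (3*(v:ℝ)*x) = 3*(v:ℝ)*(γ*ε')/10 := by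
        rw [hδdef]; field_simp
      linarith
    have hc : (0:ℝ) < γ*((v:ℝ)*ε') := mul_pos hγ (by linarith)
    have hmid : 3*(v:ℝ)*(γ*ε')/10 < γ*((v:ℝ)*ε') := by linarith
    have hgb : γ*((v:ℝ)*ε') ≤ γ*((b:ℝ)-a) := mul_le_mul_of_nonneg_left hba hγ.le
    have hcardR : (({u ∈ U | u ≤ a}.ncard : ℝ)) < ({u ∈ U | u ≤ b}.ncard : ℝ) := by
      have e5 : γ*((b:ℝ)-a) = γ*b - γ*a := by ring
      linarith [ka.2, kb.1]
    have hcard : {u ∈ U | u ≤ a}.ncard < {u ∈ U | u ≤ b}.ncard := by exact_mod_cast hcardR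
    have hfina : {u ∈ U | u ≤ a}.Finite :=
      (Set.finite_Iic a).subset (fun u hu => hu.2)
    have hex : ∃ u, u ∈ {u ∈ U | u ≤ b} ∧ u ∉ {u ∈ U | u ≤ a} := by
      by_contra hno
      push_neg at hno
      exact absurd (Set.ncard_le_ncard hno hfina) (not_le.mpr hcard)
    obtain ⟨u, ⟨huU, hub⟩, hna⟩ := hex
    have hau : a < u := by
      by_contra h
      exact hna ⟨huU, le_of_not_gt h⟩
    have hauR : (a:ℝ) < u := by exact_mod_cast hau
    have hubR : (u:ℝ) ≤ b := by exact_mod_cast hub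
    refine ⟨(u:ℝ)/v, ⟨u, huU, v, hvV, rfl⟩, ?_⟩
    have hq1 : x - ε' < (u:ℝ)/v := (lt_div_iff₀ hvpos).mpr (by nlinarith [ha1, hauR])
    have hq2 : (u:ℝ)/v ≤ x + ε' := (div_le_iff₀ hvpos).mpr (by nlinarith [hubR, hb1])
    rw [Real.dist_eq, abs_lt]
    constructor <;> linarith
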